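/- Fix a constant L > 0, a finite nonempty index set N with |N| = m, admissible functions h_i : ℝ → ℝ for i ∈ N, and a nonempty closed convex set 𝒳 ⊆ ℝ. Let β be a real number with β ≤ 1/m and let γ be a natural number with γ ≤ m. Then the set Y(β,γ) is convex and closed. -/

import Mathlib

open Set


/-- A function `h : ℝ → ℝ` is admissible with constant `L > 0` if it is convex,
continuously differentiable, its derivative is bounded by `L` and `L`-Lipschitz,
and its set of unconstrained global minimizers is nonempty and compact. -/
def Admissible (L : ℝ) (h : ℝ → ℝ) : Prop :=
  ConvexOn ℝ Set.univ h ∧ ContDiff ℝ 1 h ∧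
    (∀ x : ℝ, |deriv h x| ≤ L) ∧ LipschitzWith L.toNNReal (deriv h) ∧
    {x : ℝ | ∀ y : ℝ, h x ≤ h y}.Nonempty ∧ IsCompact {x : ℝ | ∀ y : ℝ, h x ≤ h y}

/-- A weight vector `α` over the index set `N` is `(β,γ)`-valid if all weights
are nonnegative, they sum to `1`, and at least `γ` indices in `N` have weight
at least `β`. -/
def ValidWeight {ι : Type*} (N : Finset ι) (β : ℝ) (γ : ℕ) (α : ι → ℝ) : Prop :=
  (∀ i ∈ N, 0 ≤ α i) ∧ (∑ i ∈ N, α i = 1) ∧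
    ∃ S ⊆ N, γ ≤ S.card ∧ ∀ i ∈ S, β ≤ α i

/-- `Y(β,γ)`: the union over all `(β,γ)`-valid weight vectors `α` of the set of
minimizers over the constraint set `𝒳` of `x ↦ ∑_{i∈N} α_i h_i(x)`. -/
def YSet {ι : Type*} (N : Finset ι) (h : ι → ℝ → ℝ) (X : Set ℝ) (β : ℝ) (γ : ℕ) : Set ℝ :=
  {x : ℝ | x ∈ X ∧ ∃ α : ι → ℝ, ValidWeight N β γ α ∧
    ∀ y ∈ X, ∑ i ∈ N, α i * h i x ≤ ∑ i ∈ N, α i * h i y}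


namespace YAux

lemma adm_diff {L : ℝ} {g : ℝ → ℝ} (ha : Admissible L g) : Differentiable ℝ g :=
  ha.2.1.differentiable one_ne_zero

lemma adm_cont {L : ℝ} {g : ℝ → ℝ} (ha : Admissible L g) : Continuous g :=
  ha.2.1.continuous

lemma adm_deriv_mono {L : ℝ} {g : ℝ → ℝ} (ha : Admissible L g) : Monotone (deriv g) := by
  have h := ha.1.monotoneOn_deriv (fun x _ => (adm_diff ha).differentiableAt)
  exact fun a b hab => h (mem_univ a) (mem_univ b) hab

lemma adm_deriv_zero {L : ℝ} {g : ℝ → ℝ} (ha : Admissible L g) {p : ℝ}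
    (hp : ∀ y, g p ≤ g y) : deriv g p = 0 :=
  IsLocalMin.deriv_eq_zero (Filter.Eventually.of_forall hp)

lemma adm_deriv_pos {L : ℝ} {g : ℝ → ℝ} (ha : Admissible L g) {x : ℝ}
    (hx : sSup {z | ∀ y, g z ≤ g y} < x) : 0 < deriv g x := by
  set M := {z | ∀ y, g z ≤ g y} with hM
  have hMne : M.Nonempty := ha.2.2.2.2.1
  have hMc : IsCompact M := ha.2.2.2.2.2
  have hb : sSup M ∈ M := hMc.sSup_mem hMne
  have hd0 : deriv g (sSup M) = 0 := adm_deriv_zero ha hb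
  have hmono := adm_deriv_mono ha
  have hge : 0 ≤ deriv g x := hd0 ▸ hmono hx.le
  rcases hge.lt_or_eq with hlt | heq
  · exact hlt
  exfalso
  have hanti : AntitoneOn g (Icc (sSup M) x) := by
    apply antitoneOn_of_deriv_nonpos (convex_Icc _ _) (adm_cont ha).continuousOn
      (fun t _ => ((adm_diff ha) t).differentiableWithinAt)
    intro t ht
    rw [interior_Icc] at ht
    have h1 : deriv g t ≤ deriv g x := hmono ht.2.le
    rw [← heq] at h1
    exact h1
  have hxM : x ∈ M := by
    intro y
    have hgx : g x ≤ g (sSup M) :=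
      hanti ⟨le_rfl, hx.le⟩ ⟨hx.le, le_rfl⟩ hx.le
    exact hgx.trans (hb y)
  exact absurd (le_csSup hMc.bddAbove hxM) (not_le.2 hx)

lemma adm_deriv_neg {L : ℝ} {g : ℝ → ℝ} (ha : Admissible L g) {x : ℝ}
    (hx : x < sInf {z | ∀ y, g z ≤ g y}) : deriv g x < 0 := by
  set M := {z | ∀ y, g z ≤ g y} with hM
  have hMne : M.Nonempty := ha.2.2.2.2.1
  have hMc : IsCompact M := ha.2.2.2.2.2
  have hb : sInf M ∈ M := hMc.sInf_mem hMne
  have hd0 : deriv g (sInf M) = 0 := adm_deriv_zero ha hb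
  have hge : deriv g x ≤ 0 := hd0 ▸ adm_deriv_mono ha hx.le
  rcases hge.lt_or_eq with hlt | heq
  · exact hlt
  exfalso
  have hmono' : MonotoneOn g (Icc x (sInf M)) := by
    apply monotoneOn_of_deriv_nonneg (convex_Icc _ _) (adm_cont ha).continuousOn
      (fun t _ => ((adm_diff ha) t).differentiableWithinAt)
    intro t ht
    rw [interior_Icc] at ht
    have h1 : deriv g x ≤ deriv g t := adm_deriv_mono ha ht.1.le
    rw [heq] at h1
    exact h1
  have hxM : x ∈ M := by
    intro y
    have hgx : g x ≤ g (sInf M) :=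
      hmono' ⟨le_rfl, hx.le⟩ ⟨hx.le, le_rfl⟩ hx.le
    exact hgx.trans (hb y)
  exact absurd (csInf_le hMc.bddBelow hxM) (not_le.2 hx)


variable {ι : Type*}


/-- The weighted objective, indexed by the subtype `℥N`. -/
noncomputable def FF (N : Finset ι) (h : ι → ℝ → ℝ) (v : ↥N → ℝ) (x : ℝ) : ℝ :=
  ∑ i : ↥N, v i * h i x

variable {L : ℝ} {N : Finset ι} {h : ι → ℝ → ℝ}

lemma FF_cont (hadm : ∀ i ∈ N, Admissible L (h i)) (v : ↥N → ℝ) :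
    Continuous (FF N h v) := by
  unfold FF
  exact continuous_finset_sum _ fun i _ =>
    continuous_const.mul (adm_cont (hadm i i.2))

lemma FF_cont2 (hadm : ∀ i ∈ N, Admissible L (h i)) :
    Continuous (fun p : (↥N → ℝ) × ℝ => FF N h p.1 p.2) := by
  unfold FF
  exact continuous_finset_sum _ fun i _ =>
    ((continuous_apply i).comp continuous_fst).mul ((adm_cont (hadm i i.2)).comp continuous_snd)

lemma FF_deriv (hadm : ∀ i ∈ N, Admissible L (h i)) (v : ↥N → ℝ) (x : ℝ) :
    deriv (FF N h v) x = ∑ i : ↥N, v i * deriv (h i) x := by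
  unfold FF
  rw [deriv_fun_sum (A := fun (i : ↥N) (x : ℝ) => v i * h ↑i x)
    (fun i _ => ((adm_diff (hadm i i.2)) x).const_mul (v i))]
  exact Finset.sum_congr rfl fun i _ => deriv_const_mul (v i) ((adm_diff (hadm i i.2)) x)

lemma exists_pos_weight {v : ↥N → ℝ} (hv0 : ∀ i, 0 ≤ v i) (hv1 : ∑ i : ↥N, v i = 1) :
    ∃ i : ↥N, 0 < v i := by
  by_contra hc
  push_neg at hc
  have : ∀ i : ↥N, v i = 0 := fun i => le_antisymm (hc i) (hv0 i)
  simp [this] at hv1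

lemma FF_strictMonoOn (hadm : ∀ i ∈ N, Admissible L (h i)) {v : ↥N → ℝ}
    (hv0 : ∀ i, 0 ≤ v i) (hv1 : ∑ i : ↥N, v i = 1) {B : ℝ}
    (hB : ∀ i ∈ N, sSup {z | ∀ y, h i z ≤ h i y} ≤ B) :
    StrictMonoOn (FF N h v) (Ici B) := by
  apply strictMonoOn_of_deriv_pos (convex_Ici B) (FF_cont hadm v).continuousOn
  intro x hx
  rw [interior_Ici] at hx
  rw [FF_deriv hadm]
  obtain ⟨i0, hi0⟩ := exists_pos_weight hv0 hv1
  refine Finset.sum_pos' (fun i _ => mul_nonneg (hv0 i) ?_) ⟨i0, Finset.mem_univ _, ?_⟩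
  · exact (adm_deriv_pos (hadm i i.2) ((hB i i.2).trans_lt hx)).le
  · exact mul_pos hi0 (adm_deriv_pos (hadm i0 i0.2) ((hB i0 i0.2).trans_lt hx))

lemma FF_strictAntiOn (hadm : ∀ i ∈ N, Admissible L (h i)) {v : ↥N → ℝ}
    (hv0 : ∀ i, 0 ≤ v i) (hv1 : ∑ i : ↥N, v i = 1) {A : ℝ}
    (hA : ∀ i ∈ N, A ≤ sInf {z | ∀ y, h i z ≤ h i y}) :
    StrictAntiOn (FF N h v) (Iic A) := by
  apply strictAntiOn_of_deriv_neg (convex_Iic A) (FF_cont hadm v).continuousOn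
  intro x hx
  rw [interior_Iic] at hx
  rw [FF_deriv hadm]
  obtain ⟨i0, hi0⟩ := exists_pos_weight hv0 hv1
  have hneg : ∀ i : ↥N, deriv (h i) x < 0 :=
    fun i => adm_deriv_neg (hadm i i.2) (hx.trans_le (hA i i.2))
  have : ∀ i ∈ Finset.univ, v i * deriv (h i) x ≤ 0 :=
    fun i _ => mul_nonpos_of_nonneg_of_nonpos (hv0 i) (hneg i).le
  have hlt : v i0 * deriv (h i0) x < 0 := mul_neg_of_pos_of_neg hi0 (hneg i0)
  have hres : ∑ i : ↥N, v i * deriv (h i) x < ∑ _i : ↥N, (0:ℝ) :=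
    Finset.sum_lt_sum this ⟨i0, Finset.mem_univ _, hlt⟩
  simpa using hres

lemma FF_combo (hadm : ∀ i ∈ N, Admissible L (h i)) {v : ↥N → ℝ}
    (hv0 : ∀ i, 0 ≤ v i) {w1 w2 u1 u2 : ℝ} (hu1 : 0 ≤ u1) (hu2 : 0 ≤ u2)
    (hu : u1 + u2 = 1) : FF N h v (u1 * w1 + u2 * w2) ≤ u1 * FF N h v w1 + u2 * FF N h v w2 := by
  unfold FF
  rw [Finset.mul_sum, Finset.mul_sum, ← Finset.sum_add_distrib]
  refine Finset.sum_le_sum fun i _ => ?_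
  have hc := (hadm i i.2).1.2 (mem_univ w1) (mem_univ w2) hu1 hu2 hu
  simp only [smul_eq_mul] at hc
  nlinarith [hv0 i, hc]


section Loc
variable (hadm : ∀ i ∈ N, Admissible L (h i)) {v : ↥N → ℝ}
  (hv0 : ∀ i, 0 ≤ v i) (hv1 : ∑ i : ↥N, v i = 1) {A B : ℝ}
  (hA : ∀ i ∈ N, A ≤ sInf {z | ∀ y, h i z ≤ h i y})
  (hB : ∀ i ∈ N, sSup {z | ∀ y, h i z ≤ h i y} ≤ B)
  {X : Set ℝ} (hXconv : Convex ℝ X) {c : ℝ} (hc : c ∈ X)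

include hadm hv0 hv1 hA hB hXconv hc

/-- any constrained minimizer lies in the fixed compact box -/
lemma argmin_mem_Icc {x : ℝ} (hx : x ∈ X) (hmin : ∀ y ∈ X, FF N h v x ≤ FF N h v y) :
    x ∈ Icc (min A c) (max B c) := by
  constructor
  · by_contra hlt
    push_neg at hlt
    have hmAc : min A c ∈ X := by
      have : min A c ∈ segment ℝ x c := by
        rw [segment_eq_Icc (hlt.le.trans (min_le_right A c))]
        exact ⟨hlt.le, min_le_right A c⟩
      exact hXconv.segment_subset hx hc this
    have hFlt : FF N h v (min A c) < FF N h v x :=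
      FF_strictAntiOn hadm hv0 hv1 hA (hlt.le.trans (min_le_left A c))
        (min_le_left A c) hlt
    exact absurd (hmin (min A c) hmAc) (not_le.2 hFlt)
  · by_contra hlt
    push_neg at hlt
    have hmBc : max B c ∈ X := by
      have : max B c ∈ segment ℝ c x := by
        rw [segment_eq_Icc ((le_max_right B c).trans hlt.le)]
        exact ⟨le_max_right B c, hlt.le⟩
      exact hXconv.segment_subset hc hx this
    have hFlt : FF N h v (max B c) < FF N h v x :=
      FF_strictMonoOn hadm hv0 hv1 hB (le_max_left B c)
        ((le_max_left B c).trans hlt.le) hlt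
    exact absurd (hmin (max B c) hmBc) (not_le.2 hFlt)

/-- existence of a constrained minimizer -/
lemma exists_argmin (hXcl : IsClosed X) :
    ∃ x ∈ X, ∀ y ∈ X, FF N h v x ≤ FF N h v y := by
  have hKcomp : IsCompact (X ∩ Icc (min A c) (max B c)) :=
    isCompact_Icc.inter_left hXcl
  have hKne : (X ∩ Icc (min A c) (max B c)).Nonempty :=
    ⟨c, hc, ⟨min_le_right A c, le_max_right B c⟩⟩
  obtain ⟨x, ⟨hxX, hxI⟩, hxmin⟩ :=
    hKcomp.exists_isMinOn hKne (FF_cont hadm v).continuousOn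
  refine ⟨x, hxX, fun y hy => ?_⟩
  rcases le_or_gt y (max B c) with hyB | hyB
  · rcases le_or_gt (min A c) y with hyA | hyA
    · exact hxmin ⟨hy, hyA, hyB⟩
    · -- y < min A c : go to min A c
      have hmem : min A c ∈ X := by
        have : min A c ∈ segment ℝ y c := by
          rw [segment_eq_Icc (hyA.le.trans (min_le_right A c))]
          exact ⟨hyA.le, min_le_right A c⟩
        exact hXconv.segment_subset hy hc this
      have h1 : FF N h v x ≤ FF N h v (min A c) :=
        hxmin ⟨hmem, le_rfl, (min_le_right A c).trans (le_max_right B c)⟩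
      have h2 : FF N h v (min A c) < FF N h v y :=
        FF_strictAntiOn hadm hv0 hv1 hA (hyA.le.trans (min_le_left A c))
          (min_le_left A c) hyA
      exact h1.trans h2.le
  · have hmem : max B c ∈ X := by
      have : max B c ∈ segment ℝ c y := by
        rw [segment_eq_Icc ((le_max_right B c).trans hyB.le)]
        exact ⟨le_max_right B c, hyB.le⟩
      exact hXconv.segment_subset hc hy this
    have h1 : FF N h v x ≤ FF N h v (max B c) :=
      hxmin ⟨hmem, (min_le_right A c).trans (le_max_right B c), le_rfl⟩
    have h2 : FF N h v (max B c) < FF N h v y :=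
      FF_strictMonoOn hadm hv0 hv1 hB (le_max_left B c)
        ((le_max_left B c).trans hyB.le) hyB
    exact h1.trans h2.le

end Loc


/-- validity transported to the subtype-indexed weights -/
def VW (N : Finset ι) (β : ℝ) (γ : ℕ) (v : ↥N → ℝ) : Prop :=
  (∀ i, 0 ≤ v i) ∧ (∑ i : ↥N, v i = 1) ∧
    ∃ S : Finset ↥N, γ ≤ S.card ∧ ∀ i ∈ S, β ≤ v i

/-- extension of subtype weights by zero -/
noncomputable def ext0 (N : Finset ι) (v : ↥N → ℝ) : ι → ℝ :=
  fun i => by classical exact if hi : i ∈ N then v ⟨i, hi⟩ else 0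

lemma sum_ext0 (N : Finset ι) (v : ↥N → ℝ) (g : ι → ℝ) :
    ∑ i ∈ N, ext0 N v i * g i = ∑ i : ↥N, v i * g ↑i := by
  rw [← Finset.sum_coe_sort (s := N) (f := fun i => ext0 N v i * g i)]
  exact Finset.sum_congr rfl fun i _ => by simp [ext0, i.2]

lemma sum_ext0' (N : Finset ι) (v : ↥N → ℝ) :
    ∑ i ∈ N, ext0 N v i = ∑ i : ↥N, v i := by
  rw [← Finset.sum_coe_sort (s := N) (f := fun i => ext0 N v i)]
  exact Finset.sum_congr rfl fun i _ => by simp [ext0, i.2]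

lemma VW_of_valid {β : ℝ} {γ : ℕ} {α : ι → ℝ} {N : Finset ι}
    (hα : ValidWeight N β γ α) : VW N β γ (fun i : ↥N => α ↑i) := by
  obtain ⟨h0, h1, S, hSN, hScard, hSβ⟩ := hα
  refine ⟨fun i => h0 i i.2, ?_, ?_⟩
  · rw [Finset.sum_coe_sort]; exact h1
  · classical
    refine ⟨S.subtype (· ∈ N), ?_, ?_⟩
    · rwa [Finset.card_subtype, Finset.filter_true_of_mem hSN]
    · intro i hi
      exact hSβ i (Finset.mem_subtype.1 hi)

lemma valid_of_VW {β : ℝ} {γ : ℕ} {N : Finset ι} {v : ↥N → ℝ}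
    (hv : VW N β γ v) : ValidWeight N β γ (ext0 N v) := by
  obtain ⟨h0, h1, S, hScard, hSβ⟩ := hv
  refine ⟨fun i hi => ?_, by rw [sum_ext0']; exact h1, ?_⟩
  · simp only [ext0, dif_pos hi]; exact h0 _
  · refine ⟨S.map ⟨Subtype.val, Subtype.val_injective⟩, ?_, ?_, ?_⟩
    · intro i hi
      obtain ⟨j, _, rfl⟩ := Finset.mem_map.1 hi
      exact j.2
    · rwa [Finset.card_map]
    · intro i hi
      obtain ⟨j, hj, rfl⟩ := Finset.mem_map.1 hi
      simp only [Function.Embedding.coeFn_mk]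
      have he : ext0 N v ↑j = v j := by simp [ext0, j.2]
      rw [he]; exact hSβ j hj

lemma VW_isClosed (N : Finset ι) (β : ℝ) (γ : ℕ) :
    IsClosed {v : ↥N → ℝ | VW N β γ v} := by
  classical
  have h1 : IsClosed {v : ↥N → ℝ | ∀ i, 0 ≤ v i} := by
    have : {v : ↥N → ℝ | ∀ i, 0 ≤ v i} = ⋂ i, {v | 0 ≤ v i} := by ext; simp
    rw [this]
    exact isClosed_iInter fun i => isClosed_le continuous_const (continuous_apply i)
  have h2 : IsClosed {v : ↥N → ℝ | ∑ i : ↥N, v i = 1} :=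
    isClosed_eq (continuous_finset_sum _ fun i _ => continuous_apply i) continuous_const
  have h3 : IsClosed {v : ↥N → ℝ | ∃ S : Finset ↥N, γ ≤ S.card ∧ ∀ i ∈ S, β ≤ v i} := by
    have : {v : ↥N → ℝ | ∃ S : Finset ↥N, γ ≤ S.card ∧ ∀ i ∈ S, β ≤ v i}
        = ⋃ S : Finset ↥N, ⋃ (_ : γ ≤ S.card), {v : ↥N → ℝ | ∀ i ∈ S, β ≤ v i} := by
      ext v; simp
    rw [this]
    refine isClosed_iUnion_of_finite fun S => isClosed_iUnion_of_finite fun _ => ?_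
    have : {v : ↥N → ℝ | ∀ i ∈ S, β ≤ v i} = ⋂ i ∈ S, {v : ↥N → ℝ | β ≤ v i} := by ext; simp
    rw [this]
    exact isClosed_iInter fun i => isClosed_iInter fun _ =>
      isClosed_le continuous_const (continuous_apply i)
  have : {v : ↥N → ℝ | VW N β γ v} = {v | ∀ i, 0 ≤ v i} ∩ ({v | ∑ i : ↥N, v i = 1}
      ∩ {v | ∃ S : Finset ↥N, γ ≤ S.card ∧ ∀ i ∈ S, β ≤ v i}) := by
    ext v; simp only [VW, Set.mem_inter_iff, Set.mem_setOf_eq]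
  rw [this]
  exact h1.inter (h2.inter h3)

lemma VW_le_one {N : Finset ι} {β : ℝ} {γ : ℕ} {v : ↥N → ℝ} (hv : VW N β γ v) (i : ↥N) :
    v i ≤ 1 := by
  obtain ⟨h0, h1, -⟩ := hv
  calc v i ≤ ∑ j : ↥N, v j := Finset.single_le_sum (fun j _ => h0 j) (Finset.mem_univ i)
    _ = 1 := h1


/-- `YSet` membership in terms of subtype-indexed weights. -/
lemma mem_YSet_iff {X : Set ℝ} {β : ℝ} {γ : ℕ} {x : ℝ} :
    x ∈ YSet N h X β γ ↔ x ∈ X ∧ ∃ v : ↥N → ℝ, VW N β γ v ∧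
      ∀ y ∈ X, FF N h v x ≤ FF N h v y := by
  constructor
  · rintro ⟨hxX, α, hα, hmin⟩
    refine ⟨hxX, fun i : ↥N => α ↑i, VW_of_valid hα, fun y hy => ?_⟩
    have e1 : ∀ w : ℝ, FF N h (fun i : ↥N => α ↑i) w = ∑ i ∈ N, α i * h i w := by
      intro w
      exact Finset.sum_coe_sort N (fun i => α i * h i w)
    rw [e1, e1]
    exact hmin y hy
  · rintro ⟨hxX, v, hv, hmin⟩
    refine ⟨hxX, ext0 N v, valid_of_VW hv, fun y hy => ?_⟩
    rw [sum_ext0 N v (fun i => h i x), sum_ext0 N v (fun i => h i y)]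
    exact hmin y hy

section Main

variable (hadm : ∀ i ∈ N, Admissible L (h i)) {A B : ℝ}
  (hA : ∀ i ∈ N, A ≤ sInf {z | ∀ y, h i z ≤ h i y})
  (hB : ∀ i ∈ N, sSup {z | ∀ y, h i z ≤ h i y} ≤ B)
  {X : Set ℝ} (hXconv : Convex ℝ X) (hXcl : IsClosed X) {c : ℝ} (hc : c ∈ X)
  {β : ℝ} {γ : ℕ}

include hadm hA hB hXconv hXcl hc

lemma YSet_isClosed' : IsClosed (YSet N h X β γ) := by
  classical
  set G : Set ((↥N → ℝ) × ℝ) := {p | VW N β γ p.1 ∧ p.2 ∈ X ∧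
    ∀ y ∈ X, FF N h p.1 p.2 ≤ FF N h p.1 y} with hG
  have hGclosed : IsClosed G := by
    have h3 : IsClosed {p : (↥N → ℝ) × ℝ | ∀ y ∈ X, FF N h p.1 p.2 ≤ FF N h p.1 y} := by
      have : {p : (↥N → ℝ) × ℝ | ∀ y ∈ X, FF N h p.1 p.2 ≤ FF N h p.1 y}
          = ⋂ y ∈ X, {p : (↥N → ℝ) × ℝ | FF N h p.1 p.2 ≤ FF N h p.1 y} := by ext; simp
      rw [this]
      refine isClosed_biInter fun y _ => isClosed_le (FF_cont2 hadm) ?_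
      exact (FF_cont2 hadm).comp (continuous_fst.prodMk continuous_const)
    exact ((VW_isClosed N β γ).preimage continuous_fst).inter
      ((hXcl.preimage continuous_snd).inter h3)
  have hGsub : G ⊆ (univ.pi fun _ : ↥N => Icc (0:ℝ) 1) ×ˢ Icc (min A c) (max B c) := by
    rintro ⟨v, x⟩ ⟨hv, hxX, hmin⟩
    refine ⟨fun i _ => ⟨hv.1 i, VW_le_one hv i⟩, ?_⟩
    exact argmin_mem_Icc hadm hv.1 hv.2.1 hA hB hXconv hc hxX hmin
  have hGcomp : IsCompact G :=
    ((isCompact_univ_pi fun _ => isCompact_Icc).prod isCompact_Icc).of_isClosed_subset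
      hGclosed hGsub
  have himg : YSet N h X β γ = Prod.snd '' G := by
    ext x
    rw [mem_YSet_iff]
    constructor
    · rintro ⟨hxX, v, hv, hmin⟩
      exact ⟨(v, x), ⟨hv, hxX, hmin⟩, rfl⟩
    · rintro ⟨⟨v, x'⟩, ⟨hv, hxX, hmin⟩, rfl⟩
      exact ⟨hxX, v, hv, hmin⟩
  rw [himg]
  exact (hGcomp.image continuous_snd).isClosed


lemma core_exists (a b : ↥N → ℝ)
    (hab : ∀ t ∈ Icc (0:ℝ) 1, (∀ i, 0 ≤ ((1-t) • a + t • b) i) ∧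
      (∑ i : ↥N, ((1-t) • a + t • b) i = 1))
    {x y z : ℝ} (hxX : x ∈ X) (hxm : ∀ y' ∈ X, FF N h a x ≤ FF N h a y')
    (hyX : y ∈ X) (hym : ∀ y' ∈ X, FF N h b y ≤ FF N h b y')
    (hxz : x ≤ z) (hzy : z ≤ y) :
    ∃ t ∈ Icc (0:ℝ) 1, z ∈ X ∧
      ∀ y' ∈ X, FF N h ((1-t) • a + t • b) z ≤ FF N h ((1-t) • a + t • b) y' := by
  classical
  set p : ℝ → (↥N → ℝ) := fun t => (1-t) • a + t • b with hp
  have hpc : Continuous p :=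
    ((continuous_const.sub continuous_id).smul continuous_const).add
      (continuous_id.smul continuous_const)
  have hp0 : p 0 = a := by simp [hp]
  have hp1 : p 1 = b := by simp [hp]
  set GS : Set (ℝ × ℝ) := {q | q.1 ∈ Icc (0:ℝ) 1 ∧ q.2 ∈ X ∧ q.2 ≤ z ∧
    ∀ y' ∈ X, FF N h (p q.1) q.2 ≤ FF N h (p q.1) y'} with hGS
  set GT : Set (ℝ × ℝ) := {q | q.1 ∈ Icc (0:ℝ) 1 ∧ q.2 ∈ X ∧ z ≤ q.2 ∧
    ∀ y' ∈ X, FF N h (p q.1) q.2 ≤ FF N h (p q.1) y'} with hGT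
  have hminclosed : IsClosed {q : ℝ × ℝ | ∀ y' ∈ X, FF N h (p q.1) q.2 ≤ FF N h (p q.1) y'} := by
    have : {q : ℝ × ℝ | ∀ y' ∈ X, FF N h (p q.1) q.2 ≤ FF N h (p q.1) y'}
        = ⋂ y' ∈ X, {q : ℝ × ℝ | FF N h (p q.1) q.2 ≤ FF N h (p q.1) y'} := by ext; simp
    rw [this]
    refine isClosed_biInter fun y' _ => isClosed_le ?_ ?_
    · exact (FF_cont2 hadm).comp ((hpc.comp continuous_fst).prodMk continuous_snd)
    · exact (FF_cont2 hadm).comp ((hpc.comp continuous_fst).prodMk continuous_const)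
  have hGSclosed : IsClosed GS :=
    (isClosed_Icc.preimage continuous_fst).inter ((hXcl.preimage continuous_snd).inter
      ((isClosed_le continuous_snd continuous_const).inter hminclosed))
  have hGTclosed : IsClosed GT :=
    (isClosed_Icc.preimage continuous_fst).inter ((hXcl.preimage continuous_snd).inter
      ((isClosed_le continuous_const continuous_snd).inter hminclosed))
  have hbox : ∀ q : ℝ × ℝ, q.1 ∈ Icc (0:ℝ) 1 → q.2 ∈ X →
      (∀ y' ∈ X, FF N h (p q.1) q.2 ≤ FF N h (p q.1) y') →
      q ∈ Icc (0:ℝ) 1 ×ˢ Icc (min A c) (max B c) := by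
    rintro ⟨t, w⟩ htI hwX hwm
    exact ⟨htI, argmin_mem_Icc hadm (hab t htI).1 (hab t htI).2 hA hB hXconv hc hwX hwm⟩
  have hGScomp : IsCompact GS :=
    (isCompact_Icc.prod isCompact_Icc).of_isClosed_subset hGSclosed
      (fun q hq => hbox q hq.1 hq.2.1 hq.2.2.2)
  have hGTcomp : IsCompact GT :=
    (isCompact_Icc.prod isCompact_Icc).of_isClosed_subset hGTclosed
      (fun q hq => hbox q hq.1 hq.2.1 hq.2.2.2)
  set S : Set ℝ := Prod.fst '' GS with hS
  set T : Set ℝ := Prod.fst '' GT with hT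
  have hScl : IsClosed S := (hGScomp.image continuous_fst).isClosed
  have hTcl : IsClosed T := (hGTcomp.image continuous_fst).isClosed
  have hcover : Icc (0:ℝ) 1 ⊆ S ∪ T := by
    intro t ht
    obtain ⟨w, hwX, hwm⟩ := exists_argmin hadm (hab t ht).1 (hab t ht).2 hA hB hXconv hc hXcl
    rcases le_total w z with hwz | hzw
    · exact Or.inl ⟨(t, w), ⟨ht, hwX, hwz, hwm⟩, rfl⟩
    · exact Or.inr ⟨(t, w), ⟨ht, hwX, hzw, hwm⟩, rfl⟩
  have hS0 : (0:ℝ) ∈ S := by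
    refine ⟨(0, x), ⟨⟨le_rfl, zero_le_one⟩, hxX, hxz, ?_⟩, rfl⟩
    simpa only [hp0] using hxm
  have hT1 : (1:ℝ) ∈ T := by
    refine ⟨(1, y), ⟨⟨zero_le_one, le_rfl⟩, hyX, hzy, ?_⟩, rfl⟩
    simpa only [hp1] using hym
  obtain ⟨t, htIcc, htS, htT⟩ :=
    (isPreconnected_closed_iff.1 isPreconnected_Icc) S T hScl hTcl hcover
      ⟨0, ⟨le_rfl, zero_le_one⟩, hS0⟩ ⟨1, ⟨zero_le_one, le_rfl⟩, hT1⟩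
  obtain ⟨⟨t1, w1⟩, ⟨ht1I, hw1X, hw1z, hw1m⟩, hfst1⟩ := htS
  obtain ⟨⟨t2, w2⟩, ⟨ht2I, hw2X, hzw2, hw2m⟩, hfst2⟩ := htT
  simp only at hfst1 hfst2
  subst hfst1
  subst hfst2
  have hw12 : w1 ≤ w2 := hw1z.trans hzw2
  have hzX : z ∈ X := hXconv.segment_subset hw1X hw2X
    (by rw [segment_eq_Icc hw12]; exact ⟨hw1z, hzw2⟩)
  have hFeq : FF N h (p t2) w2 = FF N h (p t2) w1 :=
    le_antisymm (hw2m w1 hw1X) (hw1m w2 hw2X)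
  have hzIcc : z ∈ segment ℝ w1 w2 := by rw [segment_eq_Icc hw12]; exact ⟨hw1z, hzw2⟩
  obtain ⟨u1, u2, hu1, hu2, hsum, hcomb⟩ := hzIcc
  simp only [smul_eq_mul] at hcomb
  have hFz : FF N h (p t2) z ≤ FF N h (p t2) w1 := by
    calc FF N h (p t2) z = FF N h (p t2) (u1 * w1 + u2 * w2) := by rw [hcomb]
      _ ≤ u1 * FF N h (p t2) w1 + u2 * FF N h (p t2) w2 :=
          FF_combo hadm (hab t2 htIcc).1 hu1 hu2 hsum
      _ = FF N h (p t2) w1 := by rw [hFeq]; linear_combination FF N h (p t2) w1 * hsum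
  exact ⟨t2, htIcc, hzX, fun y' hy' => hFz.trans (hw1m y' hy')⟩

end Main

lemma VW_mix {β : ℝ} {γ : ℕ} {N : Finset ι} {v w : ↥N → ℝ} (hv : VW N β γ v)
    (hw0 : ∀ i, 0 ≤ w i) (hw1 : ∑ i : ↥N, w i = 1) (hwβ : ∀ i, β ≤ w i)
    {t : ℝ} (ht : t ∈ Icc (0:ℝ) 1) : VW N β γ ((1-t) • v + t • w) := by
  obtain ⟨h0, h1, S, hScard, hSβ⟩ := hv
  have ht0 : (0:ℝ) ≤ 1 - t := by linarith [ht.2]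
  refine ⟨fun i => ?_, ?_, S, hScard, fun i hi => ?_⟩
  · simp only [Pi.add_apply, Pi.smul_apply, smul_eq_mul]
    have := h0 i; have := hw0 i; nlinarith [ht.1]
  · simp only [Pi.add_apply, Pi.smul_apply, smul_eq_mul]
    rw [Finset.sum_add_distrib, ← Finset.mul_sum, ← Finset.mul_sum, h1, hw1]
    ring
  · simp only [Pi.add_apply, Pi.smul_apply, smul_eq_mul]
    nlinarith [hSβ i hi, hwβ i, ht.1]


section Assemble
variable {L : ℝ} {N : Finset ι} {h : ι → ℝ → ℝ}
  (hadm : ∀ i ∈ N, Admissible L (h i)) {A B : ℝ}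
  (hA : ∀ i ∈ N, A ≤ sInf {z | ∀ y, h i z ≤ h i y})
  (hB : ∀ i ∈ N, sSup {z | ∀ y, h i z ≤ h i y} ≤ B)
  {X : Set ℝ} (hXconv : Convex ℝ X) (hXcl : IsClosed X) {c : ℝ} (hc : c ∈ X)
  {β : ℝ} {γ : ℕ}

include hadm hA hB hXconv hXcl hc

lemma mem_YSet_of_between {u : ↥N → ℝ} (huVW : VW N β γ u) (huβ : ∀ i, β ≤ u i)
    {w : ℝ} (hwX : w ∈ X) (hwm : ∀ y ∈ X, FF N h u w ≤ FF N h u y)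
    {v1 v2 : ↥N → ℝ} {x1 x2 z : ℝ} (hv1 : VW N β γ v1) (hv2 : VW N β γ v2)
    (hx1X : x1 ∈ X) (hm1 : ∀ y ∈ X, FF N h v1 x1 ≤ FF N h v1 y)
    (hx2X : x2 ∈ X) (hm2 : ∀ y ∈ X, FF N h v2 x2 ≤ FF N h v2 y)
    (h1z : x1 ≤ z) (hz2 : z ≤ x2) : z ∈ YSet N h X β γ := by
  rcases le_total z w with hzw | hwz
  · have hab : ∀ t ∈ Icc (0:ℝ) 1, (∀ i, 0 ≤ ((1-t) • v1 + t • u) i) ∧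
        (∑ i : ↥N, ((1-t) • v1 + t • u) i = 1) := fun t ht =>
      ⟨(VW_mix hv1 huVW.1 huVW.2.1 huβ ht).1, (VW_mix hv1 huVW.1 huVW.2.1 huβ ht).2.1⟩
    obtain ⟨t, htI, hzX, hzm⟩ :=
      core_exists hadm hA hB hXconv hXcl hc v1 u hab hx1X hm1 hwX hwm h1z hzw
    exact mem_YSet_iff.2 ⟨hzX, _, VW_mix hv1 huVW.1 huVW.2.1 huβ htI, hzm⟩
  · have heq : ∀ t : ℝ, (1-t) • u + t • v2 = (1-(1-t)) • v2 + (1-t) • u := by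
      intro t; funext i
      simp only [Pi.add_apply, Pi.smul_apply, smul_eq_mul]
      ring
    have hmem : ∀ t : ℝ, t ∈ Icc (0:ℝ) 1 → VW N β γ ((1-t) • u + t • v2) := by
      intro t ht
      have h1t : 1 - t ∈ Icc (0:ℝ) 1 := ⟨by linarith [ht.2], by linarith [ht.1]⟩
      rw [heq t]
      exact VW_mix hv2 huVW.1 huVW.2.1 huβ h1t
    have hab : ∀ t ∈ Icc (0:ℝ) 1, (∀ i, 0 ≤ ((1-t) • u + t • v2) i) ∧
        (∑ i : ↥N, ((1-t) • u + t • v2) i = 1) := fun t ht =>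
      ⟨(hmem t ht).1, (hmem t ht).2.1⟩
    obtain ⟨t, htI, hzX, hzm⟩ :=
      core_exists hadm hA hB hXconv hXcl hc u v2 hab hwX hwm hx2X hm2 hwz hz2
    exact mem_YSet_iff.2 ⟨hzX, _, hmem t htI, hzm⟩

end Assemble
end YAux

/-- Lemma (convex B cons): if `β ≤ 1/|N|` and `γ ≤ |N|`, the set `Y(β,γ)` of
constrained optima of valid functions is convex and closed. -/
theorem YSet_convex_isClosed {ι : Type*} (L : ℝ) (hL : 0 < L)
    (N : Finset ι) (hNne : N.Nonempty) (m : ℕ) (hm : N.card = m)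
    (h : ι → ℝ → ℝ) (hadm : ∀ i ∈ N, Admissible L (h i))
    (X : Set ℝ) (hXne : X.Nonempty) (hXcl : IsClosed X) (hXconv : Convex ℝ X)
    (β : ℝ) (hβ : β ≤ 1 / (m : ℝ)) (γ : ℕ) (hγ : γ ≤ m) :
    Convex ℝ (YSet N h X β γ) ∧ IsClosed (YSet N h X β γ) := by
  classical
  open YAux in
  obtain ⟨c, hc⟩ := hXne
  have hA : ∀ i ∈ N, (N.inf' hNne fun j => sInf {z | ∀ y, h j z ≤ h j y})
      ≤ sInf {z | ∀ y, h i z ≤ h i y} := fun i hi => Finset.inf'_le (fun j => sInf {z | ∀ y, h j z ≤ h j y}) hi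
  have hB : ∀ i ∈ N, sSup {z | ∀ y, h i z ≤ h i y}
      ≤ N.sup' hNne fun j => sSup {z | ∀ y, h j z ≤ h j y} := fun i hi => Finset.le_sup' (fun j => sSup {z | ∀ y, h j z ≤ h j y}) hi
  have hm0 : 0 < m := hm ▸ Finset.card_pos.2 hNne
  have hmR : (0:ℝ) < (m:ℕ) := by exact_mod_cast hm0
  set u : ↥N → ℝ := fun _ => 1/(m:ℝ) with hu
  have hu0 : ∀ i : ↥N, 0 ≤ u i := fun _ => by positivity
  have hcards : (Finset.univ : Finset ↥N).card = m := by
    rw [Finset.card_univ, Fintype.card_coe, hm]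
  have husum : ∑ i : ↥N, u i = 1 := by
    rw [hu, Finset.sum_const, hcards, nsmul_eq_mul]
    field_simp
  have huβ : ∀ i : ↥N, β ≤ u i := fun _ => hβ
  have huVW : VW N β γ u :=
    ⟨hu0, husum, Finset.univ, by rw [hcards]; exact hγ, fun i _ => huβ i⟩
  constructor
  · intro x1 hx1 x2 hx2 t1 t2 ht1 ht2 hts
    rw [mem_YSet_iff] at hx1 hx2
    obtain ⟨hx1X, v1, hv1, hmin1⟩ := hx1
    obtain ⟨hx2X, v2, hv2, hmin2⟩ := hx2
    obtain ⟨w, hwX, hwm⟩ := exists_argmin hadm hu0 husum hA hB hXconv hc hXcl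
    simp only [smul_eq_mul]
    rcases le_total x1 x2 with hc12 | hc12
    · have e1 : x1 ≤ t1 * x1 + t2 * x2 := by
        have h2 := mul_le_mul_of_nonneg_left hc12 ht2
        have h3 : t1 * x1 + t2 * x1 = x1 := by rw [← add_mul, hts, one_mul]
        linarith
      have e2 : t1 * x1 + t2 * x2 ≤ x2 := by
        have h2 := mul_le_mul_of_nonneg_left hc12 ht1
        have h3 : t1 * x2 + t2 * x2 = x2 := by rw [← add_mul, hts, one_mul]
        linarith
      exact mem_YSet_of_between hadm hA hB hXconv hXcl hc huVW huβ hwX hwm hv1 hv2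
        hx1X hmin1 hx2X hmin2 e1 e2
    · have e1 : x2 ≤ t1 * x1 + t2 * x2 := by
        have h2 := mul_le_mul_of_nonneg_left hc12 ht1
        have h3 : t1 * x2 + t2 * x2 = x2 := by rw [← add_mul, hts, one_mul]
        linarith
      have e2 : t1 * x1 + t2 * x2 ≤ x1 := by
        have h2 := mul_le_mul_of_nonneg_left hc12 ht2
        have h3 : t1 * x1 + t2 * x1 = x1 := by rw [← add_mul, hts, one_mul]
        linarith
      exact mem_YSet_of_between hadm hA hB hXconv hXcl hc huVW huβ hwX hwm hv2 hv1
        hx2X hmin2 hx1X hmin1 e1 e2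
  · exact YSet_isClosed' hadm hA hB hXconv hXcl hc
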